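/- Let U, V, W be nonempty compact subsets of ℂ and p ∈ [1,∞]. For every A ∈ PE(U,V,W), ‖A‖_p = max_{B ∈ M(U,V,W)} ‖B‖_p =: M_p, the maximum being attained. If moreover (U,V,W) is compatible, then ‖A⁻¹‖_p = max_{B ∈ M(U,V,W)} ‖B⁻¹‖_p =: N_p, the maximum again being attained. -/

import Mathlib

open scoped ENNReal

noncomputable section

/-- The sequence space `ℓᵖ(ℤ)` (complex valued). -/
abbrev SeqZ (p : ℝ≥0∞) : Type := lp (fun _ : ℤ => ℂ) p
/-- The sequence space `ℓᵖ(ℕ)` (complex valued). -/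
abbrev SeqN (p : ℝ≥0∞) : Type := lp (fun _ : ℕ => ℂ) p

/-- The three diagonals take values in `U`, `V`, `W` respectively. -/
def RangesIn (U V W : Set ℂ) {ι : Type*} (u v w : ι → ℂ) : Prop :=
  (∀ i, u i ∈ U) ∧ (∀ i, v i ∈ V) ∧ (∀ i, w i ∈ W)

/-- `A` acts on `ℓᵖ(ℤ)` as the bi-infinite tridiagonal matrix with subdiagonal `u`
(entries `a_{i,i-1} = u i`), main diagonal `v` and superdiagonal `w` (`a_{i,i+1} = w i`). -/
def BiActs {p : ℝ≥0∞} [Fact (1 ≤ p)] (A : SeqZ p →L[ℂ] SeqZ p) (u v w : ℤ → ℂ) : Prop :=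
  ∀ (x : SeqZ p) (i : ℤ),
    (A x : ∀ _ : ℤ, ℂ) i =
      u i * (x : ∀ _ : ℤ, ℂ) (i - 1) + v i * (x : ∀ _ : ℤ, ℂ) i +
        w i * (x : ∀ _ : ℤ, ℂ) (i + 1)

/-- `A` acts on `ℓᵖ(ℕ)` as the semi-infinite tridiagonal matrix with subdiagonal `u`
(entries `a_{i,i-1} = u i` for `i ≥ 1`), main diagonal `v` and superdiagonal `w`. -/
def SemiActs {p : ℝ≥0∞} [Fact (1 ≤ p)] (A : SeqN p →L[ℂ] SeqN p) (u v w : ℕ → ℂ) : Prop :=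
  ∀ (x : SeqN p) (i : ℕ),
    (A x : ∀ _ : ℕ, ℂ) i =
      (if i = 0 then 0 else u i * (x : ∀ _ : ℕ, ℂ) (i - 1)) + v i * (x : ∀ _ : ℕ, ℂ) i +
        w i * (x : ∀ _ : ℕ, ℂ) (i + 1)

/-- membership in `M(U,V,W)`: bi-infinite tridiagonal operators over `(U,V,W)`. -/
def MemM (U V W : Set ℂ) {p : ℝ≥0∞} [Fact (1 ≤ p)] (A : SeqZ p →L[ℂ] SeqZ p) : Prop :=
  ∃ u v w : ℤ → ℂ, RangesIn U V W u v w ∧ BiActs A u v w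

/-- membership in `M₊(U,V,W)`: semi-infinite tridiagonal operators over `(U,V,W)`. -/
def MemMPlus (U V W : Set ℂ) {p : ℝ≥0∞} [Fact (1 ≤ p)] (A : SeqN p →L[ℂ] SeqN p) : Prop :=
  ∃ u v w : ℕ → ℂ, RangesIn U V W u v w ∧ SemiActs A u v w

/-- pseudoergodicity of bi-infinite diagonal data: every finite pattern of diagonals over
`(U,V,W)` is reproduced to arbitrary accuracy somewhere along the diagonals. -/
def PseudoergodicZ (U V W : Set ℂ) (u v w : ℤ → ℂ) : Prop :=
  ∀ (n : ℕ) (bu bv bw : Fin n → ℂ), RangesIn U V W bu bv bw →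
    ∀ ε : ℝ, 0 < ε → ∃ k : ℤ, ∀ i : Fin n,
      ‖u (k + (i : ℕ)) - bu i‖ < ε ∧ ‖v (k + (i : ℕ)) - bv i‖ < ε ∧
        ‖w (k + (i : ℕ)) - bw i‖ < ε

/-- pseudoergodicity of semi-infinite diagonal data. -/
def PseudoergodicN (U V W : Set ℂ) (u v w : ℕ → ℂ) : Prop :=
  ∀ (n : ℕ) (bu bv bw : Fin n → ℂ), RangesIn U V W bu bv bw →
    ∀ ε : ℝ, 0 < ε → ∃ k : ℕ, ∀ i : Fin n,
      ‖u (k + (i : ℕ)) - bu i‖ < ε ∧ ‖v (k + (i : ℕ)) - bv i‖ < ε ∧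
        ‖w (k + (i : ℕ)) - bw i‖ < ε

/-- membership in `PE(U,V,W)`: pseudoergodic bi-infinite operators. -/
def MemPE (U V W : Set ℂ) {p : ℝ≥0∞} [Fact (1 ≤ p)] (A : SeqZ p →L[ℂ] SeqZ p) : Prop :=
  ∃ u v w : ℤ → ℂ, RangesIn U V W u v w ∧ PseudoergodicZ U V W u v w ∧ BiActs A u v w

/-- membership in `PE₊(U,V,W)`: pseudoergodic semi-infinite operators. -/
def MemPEPlus (U V W : Set ℂ) {p : ℝ≥0∞} [Fact (1 ≤ p)] (A : SeqN p →L[ℂ] SeqN p) : Prop :=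
  ∃ u v w : ℕ → ℂ, RangesIn U V W u v w ∧ PseudoergodicN U V W u v w ∧ SemiActs A u v w

/-- `(U,V,W)` is compatible: every operator in `M(U,V,W)` is invertible on `ℓᵖ(ℤ)`
for every `p ∈ [1,∞]`. -/
def Compatible (U V W : Set ℂ) : Prop :=
  ∀ (p : ℝ≥0∞) [Fact (1 ≤ p)], ∀ A : SeqZ p →L[ℂ] SeqZ p, MemM U V W A → IsUnit A

/-- `α(A)`: the dimension of the kernel. -/
def alphaDim {E : Type*} [NormedAddCommGroup E] [NormedSpace ℂ E] (A : E →L[ℂ] E) : ℕ :=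
  Module.finrank ℂ (LinearMap.ker (A : E →ₗ[ℂ] E))

/-- `β(A)`: the codimension of the range. -/
def betaDim {E : Type*} [NormedAddCommGroup E] [NormedSpace ℂ E] (A : E →L[ℂ] E) : ℕ :=
  Module.finrank ℂ (E ⧸ LinearMap.range (A : E →ₗ[ℂ] E))

/-- `A` is a Fredholm operator: finite-dimensional kernel and finite-codimensional range. -/
def IsFredholmOp {E : Type*} [NormedAddCommGroup E] [NormedSpace ℂ E] (A : E →L[ℂ] E) : Prop :=
  FiniteDimensional ℂ (LinearMap.ker (A : E →ₗ[ℂ] E)) ∧ FiniteDimensional ℂ (E ⧸ LinearMap.range (A : E →ₗ[ℂ] E))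

/-- the Fredholm index `ind A = α(A) - β(A)`. -/
def fredIndex {E : Type*} [NormedAddCommGroup E] [NormedSpace ℂ E] (A : E →L[ℂ] E) : ℤ :=
  (alphaDim A : ℤ) - (betaDim A : ℤ)

/-- `(U,V,W)` is compatible and the common Fredholm index `κ(U,V,W)` of the semi-infinite
operators in `M₊(U,V,W)` equals `k`. -/
def KappaIs (U V W : Set ℂ) (k : ℤ) : Prop :=
  Compatible U V W ∧
    ∀ (p : ℝ≥0∞) [Fact (1 ≤ p)], ∀ B : SeqN p →L[ℂ] SeqN p, MemMPlus U V W B →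
      IsFredholmOp B ∧ fredIndex B = k

/-- union of the `ℓᵖ`-spectra of all operators in `M(U,V,W)`, at exponent `p`. -/
def specSetZAt (U V W : Set ℂ) (p : ℝ≥0∞) [Fact (1 ≤ p)] : Set ℂ :=
  {lam | ∃ C : SeqZ p →L[ℂ] SeqZ p, MemM U V W C ∧ lam ∈ spectrum ℂ C}

/-- union of the `ℓᵖ`-spectra of all operators in `M₊(U,V,W)`, at exponent `p`. -/
def specSetNAt (U V W : Set ℂ) (p : ℝ≥0∞) [Fact (1 ≤ p)] : Set ℂ :=
  {lam | ∃ C : SeqN p →L[ℂ] SeqN p, MemMPlus U V W C ∧ lam ∈ spectrum ℂ C}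

/-- `Σ(U,V,W)`: the union of the spectra of all operators in `M(U,V,W)`. -/
def SigmaSet (U V W : Set ℂ) : Set ℂ :=
  ⋃ (p : ℝ≥0∞), ⋃ (h : Fact (1 ≤ p)), @specSetZAt U V W p h

/-- `Σ₊(U,V,W)`: the union of the spectra of all operators in `M₊(U,V,W)`. -/
def SigmaPlusSet (U V W : Set ℂ) : Set ℂ :=
  ⋃ (p : ℝ≥0∞), ⋃ (h : Fact (1 ≤ p)), @specSetNAt U V W p h

/-- `V - λ`. -/
def shiftSet (V : Set ℂ) (lam : ℂ) : Set ℂ := (fun v => v - lam) '' V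

/-- `Σ_k(U,V,W) = {λ : (U, V-λ, W) compatible with κ(U, V-λ, W) = k}`. -/
def SigmaK (U V W : Set ℂ) (k : ℤ) : Set ℂ := {lam | KappaIs U (shiftSet V lam) W k}

/-- `Σ_{±1} = Σ_{-1} ∪ Σ_1`. -/
def SigmaPM (U V W : Set ℂ) : Set ℂ := SigmaK U V W (-1) ∪ SigmaK U V W 1

/-- the ellipse `E(u,v,w) = {u t + v + w/t : |t| = 1}`. -/
def ellipse (u v w : ℂ) : Set ℂ := (fun t : ℂ => u * t + v + w / t) '' {t : ℂ | ‖t‖ = 1}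

open Polynomial in
open Classical in
/-- winding number of the loop `t ↦ u t + v + w/t` (`t` on the unit circle, traversed
counter-clockwise) around `lam`, computed, via the argument principle, as the number of
roots (with multiplicity) of `u t² + (v - λ) t + w` in the open unit disk minus the order
of the pole at `0`.  (Valid whenever `lam` does not lie on the ellipse itself.) -/
def windingAt (u v w lam : ℂ) : ℤ :=
  (((C u * X ^ 2 + C (v - lam) * X + C w).roots.filter (fun z => ‖z‖ < 1)).card : ℤ) - 1

/-- `lam` lies inside the oriented ellipse `E(u,v,w)`: not on it, nonzero winding number. -/
def insideEllipse (u v w lam : ℂ) : Prop :=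
  lam ∉ ellipse u v w ∧ windingAt u v w lam ≠ 0

/-- `E_∩`: points inside all the ellipses `E(u,v,w)`, `(u,v,w) ∈ U × V × W`. -/
def Ecap (U V W : Set ℂ) : Set ℂ :=
  {lam | ∀ u ∈ U, ∀ v ∈ V, ∀ w ∈ W, insideEllipse u v w lam}

/-- `E₁`: points of `E_∩` circumnavigated clockwise (winding number `-1`) by all ellipses. -/
def Eone (U V W : Set ℂ) : Set ℂ :=
  {lam ∈ Ecap U V W | ∀ u ∈ U, ∀ v ∈ V, ∀ w ∈ W, windingAt u v w lam = -1}

/-- `E_{-1}`: points of `E_∩` circumnavigated counter-clockwise (winding number `1`). -/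
def EmOne (U V W : Set ℂ) : Set ℂ :=
  {lam ∈ Ecap U V W | ∀ u ∈ U, ∀ v ∈ V, ∀ w ∈ W, windingAt u v w lam = 1}

/-- `E_{±1} = E_{-1} ∪ E₁`. -/
def Epm (U V W : Set ℂ) : Set ℂ := EmOne U V W ∪ Eone U V W

/-- `E_∪`: the union of the filled ellipses. -/
def Ecup (U V W : Set ℂ) : Set ℂ :=
  ⋃ (u ∈ U) (v ∈ V) (w ∈ W), convexHull ℝ (ellipse u v w)

/-- `sup` of moduli over a set, e.g. `u^* = max_{u ∈ U} |u|`. -/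
def supAbs (S : Set ℂ) : ℝ := sSup ((fun z : ℂ => ‖z‖) '' S)

/-- `inf` of moduli over a set, e.g. `u_* = min_{u ∈ U} |u|`. -/
def infAbs (S : Set ℂ) : ℝ := sInf ((fun z : ℂ => ‖z‖) '' S)

/-- `M_p = sup_{B ∈ M(U,V,W)} ‖B‖_p`. -/
def Mnorm (U V W : Set ℂ) (p : ℝ≥0∞) [Fact (1 ≤ p)] : ℝ :=
  sSup {x : ℝ | ∃ B : SeqZ p →L[ℂ] SeqZ p, MemM U V W B ∧ x = ‖B‖}

/-- `N_p = sup_{B ∈ M(U,V,W)} ‖B⁻¹‖_p`. -/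
def Nnorm (U V W : Set ℂ) (p : ℝ≥0∞) [Fact (1 ≤ p)] : ℝ :=
  sSup {x : ℝ | ∃ B : SeqZ p →L[ℂ] SeqZ p, MemM U V W B ∧ x = ‖Ring.inverse B‖}

/-- `M_{+,p} = sup_{B₊ ∈ M₊(U,V,W)} ‖B₊‖_p`. -/
def MnormPlus (U V W : Set ℂ) (p : ℝ≥0∞) [Fact (1 ≤ p)] : ℝ :=
  sSup {x : ℝ | ∃ B : SeqN p →L[ℂ] SeqN p, MemMPlus U V W B ∧ x = ‖B‖}

/-- `N_{+,p} = sup_{B₊ ∈ M₊(U,V,W)} ‖B₊⁻¹‖_p`. -/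
def NnormPlus (U V W : Set ℂ) (p : ℝ≥0∞) [Fact (1 ≤ p)] : ℝ :=
  sSup {x : ℝ | ∃ B : SeqN p →L[ℂ] SeqN p, MemMPlus U V W B ∧ x = ‖Ring.inverse B‖}

/-- `p` is favourable for `(U,V,W)`: `‖A₊⁻¹‖_p = N_{+,p} = N_p` for all `A₊ ∈ PE₊(U,V,W)`. -/
def Favourable (U V W : Set ℂ) (p : ℝ≥0∞) [Fact (1 ≤ p)] : Prop :=
  ∀ A : SeqN p →L[ℂ] SeqN p, MemPEPlus U V W A →
    ‖Ring.inverse A‖ = NnormPlus U V W p ∧ NnormPlus U V W p = Nnorm U V W p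

/-- the `n × n` tridiagonal matrix with diagonals `u` (sub), `v` (main), `w` (super). -/
def JacobiMatrix {n : ℕ} (u v w : Fin n → ℂ) : Matrix (Fin n) (Fin n) ℂ :=
  fun i j =>
    if ((i : ℕ) : ℤ) = ((j : ℕ) : ℤ) + 1 then u i
    else if i = j then v i
    else if ((j : ℕ) : ℤ) = ((i : ℕ) : ℤ) + 1 then w i
    else 0

/-- the `ℓᵖ` norm of a finite complex vector. -/
def pVecNorm (p : ℝ≥0∞) [Fact (1 ≤ p)] {n : ℕ} (x : Fin n → ℂ) : ℝ :=
  ‖(WithLp.equiv p (Fin n → ℂ)).symm x‖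

/-- the operator norm of an `n × n` matrix acting on `(ℂⁿ, ‖·‖_p)`. -/
def matOpNorm (p : ℝ≥0∞) [Fact (1 ≤ p)] {n : ℕ} (F : Matrix (Fin n) (Fin n) ℂ) : ℝ :=
  sInf {c : ℝ | 0 ≤ c ∧ ∀ x : Fin n → ℂ, pVecNorm p (F.mulVec x) ≤ c * pVecNorm p x}

/-- the `p`-operator norm of the inverse matrix. -/
def matInvNorm (p : ℝ≥0∞) [Fact (1 ≤ p)] {n : ℕ} (F : Matrix (Fin n) (Fin n) ℂ) : ℝ :=
  matOpNorm p F⁻¹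

/-- `M_{n,p}`: sup of the `p`-norms of the `n × n` tridiagonal matrices over `(U,V,W)`. -/
def MnormFinN (U V W : Set ℂ) (p : ℝ≥0∞) [Fact (1 ≤ p)] (n : ℕ) : ℝ :=
  sSup {x : ℝ | ∃ u v w : Fin n → ℂ, RangesIn U V W u v w ∧
    x = matOpNorm p (JacobiMatrix u v w)}

/-- `M_{fin,p}`: sup of the `p`-norms of all finite tridiagonal matrices over `(U,V,W)`. -/
def MnormFin (U V W : Set ℂ) (p : ℝ≥0∞) [Fact (1 ≤ p)] : ℝ :=
  sSup {x : ℝ | ∃ (n : ℕ) (u v w : Fin n → ℂ), RangesIn U V W u v w ∧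
    x = matOpNorm p (JacobiMatrix u v w)}

/-- `N_{fin,p}`: sup of the `p`-norms of the inverses of all finite tridiagonal matrices. -/
def NnormFin (U V W : Set ℂ) (p : ℝ≥0∞) [Fact (1 ≤ p)] : ℝ :=
  sSup {x : ℝ | ∃ (n : ℕ) (u v w : Fin n → ℂ), RangesIn U V W u v w ∧
    x = matInvNorm p (JacobiMatrix u v w)}

/-- entry `(i,j)` of the bi-infinite tridiagonal matrix with diagonals `u`, `v`, `w`. -/
def secEntryZ (u v w : ℤ → ℂ) (i j : ℤ) : ℂ :=
  if i = j + 1 then u i else if i = j then v i else if j = i + 1 then w i else 0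

/-- the finite section `(a_{ij})_{i,j=l}^{r}` of the bi-infinite tridiagonal matrix. -/
def finSecZ (u v w : ℤ → ℂ) (l r : ℤ) :
    Matrix (Fin (r + 1 - l).toNat) (Fin (r + 1 - l).toNat) ℂ :=
  fun i j => secEntryZ u v w (l + (i : ℕ)) (l + (j : ℕ))

/-- entry `(i,j)` of the semi-infinite tridiagonal matrix with diagonals `u`, `v`, `w`. -/
def secEntryN (u v w : ℕ → ℂ) (i j : ℕ) : ℂ :=
  if i = j + 1 then u i else if i = j then v i else if j = i + 1 then w i else 0

/-- the `n`-th finite section (first `n` rows and columns) of the semi-infinite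
tridiagonal matrix with diagonals `u`, `v`, `w`. -/
def finSecN (u v w : ℕ → ℂ) (n : ℕ) : Matrix (Fin n) (Fin n) ℂ :=
  fun i j => secEntryN u v w i j

/-- stability of the sequence of finite sections of a bi-infinite tridiagonal matrix with
cut-off sequences `l`, `r`: eventually invertible with uniformly bounded inverses. -/
def StableSecsZ (p : ℝ≥0∞) [Fact (1 ≤ p)] (u v w : ℤ → ℂ) (l r : ℕ → ℤ) : Prop :=
  ∃ (n₀ : ℕ) (c : ℝ), ∀ n, n₀ ≤ n →
    IsUnit (finSecZ u v w (l n) (r n)) ∧ matInvNorm p (finSecZ u v w (l n) (r n)) ≤ c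

/-- stability of the sequence of finite sections of a semi-infinite tridiagonal matrix. -/
def StableSecsN (p : ℝ≥0∞) [Fact (1 ≤ p)] (u v w : ℕ → ℂ) (r : ℕ → ℕ) : Prop :=
  ∃ (n₀ : ℕ) (c : ℝ), ∀ n, n₀ ≤ n →
    IsUnit (finSecN u v w (r n)) ∧ matInvNorm p (finSecN u v w (r n)) ≤ c

/-- the full finite section method applies to every operator in `M(U,V,W)`:
the operator is invertible and the finite sections `(a_{ij})_{i,j=-n}^{n}` are stable. -/
def FullFSMAppliesZ (U V W : Set ℂ) : Prop :=
  ∀ (p : ℝ≥0∞) [Fact (1 ≤ p)], ∀ u v w : ℤ → ℂ, RangesIn U V W u v w →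
    ∀ A : SeqZ p →L[ℂ] SeqZ p, BiActs A u v w →
      IsUnit A ∧ StableSecsZ p u v w (fun n => -(n : ℤ)) (fun n => (n : ℤ))

/-- the full finite section method applies to every operator in `M₊(U,V,W)`:
the operator is invertible and the finite sections `(a_{ij})_{i,j=1}^{n}` are stable. -/
def FullFSMAppliesN (U V W : Set ℂ) : Prop :=
  ∀ (p : ℝ≥0∞) [Fact (1 ≤ p)], ∀ u v w : ℕ → ℂ, RangesIn U V W u v w →
    ∀ A : SeqN p →L[ℂ] SeqN p, SemiActs A u v w →
      IsUnit A ∧ StableSecsN p u v w (fun n => n)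

/-- one operator in `PE₊(U,V,W)` is invertible (on some, equivalently each, `ℓᵖ(ℕ)`). -/
def PEPlusInvAt (U V W : Set ℂ) (p : ℝ≥0∞) [Fact (1 ≤ p)] : Prop :=
  ∃ B : SeqN p →L[ℂ] SeqN p, MemPEPlus U V W B ∧ IsUnit B

def ExistsInvPEPlus (U V W : Set ℂ) : Prop :=
  ∃ (p : ℝ≥0∞) (h : Fact (1 ≤ p)), @PEPlusInvAt U V W p h

/-- one operator in `PE₊(U,V,W)` is Fredholm of index `0`. -/
def PEPlusFred0At (U V W : Set ℂ) (p : ℝ≥0∞) [Fact (1 ≤ p)] : Prop :=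
  ∃ B : SeqN p →L[ℂ] SeqN p, MemPEPlus U V W B ∧ IsFredholmOp B ∧ fredIndex B = 0

def ExistsFred0PEPlus (U V W : Set ℂ) : Prop :=
  ∃ (p : ℝ≥0∞) (h : Fact (1 ≤ p)), @PEPlusFred0At U V W p h

/-- all operators in `M₊(U,V,W)` are invertible (on every `ℓᵖ(ℕ)`). -/
def AllMPlusInv (U V W : Set ℂ) : Prop :=
  ∀ (p : ℝ≥0∞) [Fact (1 ≤ p)], ∀ B : SeqN p →L[ℂ] SeqN p, MemMPlus U V W B → IsUnit B

/-- the `ε`-pseudospectrum of a bounded operator (the spectrum together with the points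
where the resolvent has norm `> 1/ε`). -/
def pspec {E : Type*} [NormedAddCommGroup E] [NormedSpace ℂ E] (ε : ℝ)
    (A : E →L[ℂ] E) : Set ℂ :=
  {lam | ¬IsUnit (A - lam • (1 : E →L[ℂ] E)) ∨
    1 / ε < ‖Ring.inverse (A - lam • (1 : E →L[ℂ] E))‖}

/-- the `ε`-pseudospectrum of an `n × n` matrix, in the `p`-operator norm. -/
def pspecMat (p : ℝ≥0∞) [Fact (1 ≤ p)] {n : ℕ} (ε : ℝ) (F : Matrix (Fin n) (Fin n) ℂ) :
    Set ℂ :=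
  {lam | ¬IsUnit (F - lam • (1 : Matrix (Fin n) (Fin n) ℂ)) ∨
    1 / ε < matInvNorm p (F - lam • (1 : Matrix (Fin n) (Fin n) ℂ))}

/-- `Σ_ε^p`: union of the `ε`-pseudospectra of all operators in `M(U,V,W)`. -/
def SigmaEps (U V W : Set ℂ) (p : ℝ≥0∞) [Fact (1 ≤ p)] (ε : ℝ) : Set ℂ :=
  {lam | ∃ B : SeqZ p →L[ℂ] SeqZ p, MemM U V W B ∧ lam ∈ pspec ε B}

/-- `Σ_{+,ε}^p`: union of the `ε`-pseudospectra of all operators in `M₊(U,V,W)`. -/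
def SigmaPlusEps (U V W : Set ℂ) (p : ℝ≥0∞) [Fact (1 ≤ p)] (ε : ℝ) : Set ℂ :=
  {lam | ∃ B : SeqN p →L[ℂ] SeqN p, MemMPlus U V W B ∧ lam ∈ pspec ε B}

/-- `p` is favourable for all the (compatible, index zero) shifted triples `(U, V-λ, W)`. -/
def FavAll (U V W : Set ℂ) (p : ℝ≥0∞) [Fact (1 ≤ p)] : Prop :=
  ∀ lam : ℂ, KappaIs U (shiftSet V lam) W 0 → Favourable U (shiftSet V lam) W p

end

noncomputable section AuxiliaryLemmas

set_option linter.unusedSectionVars false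

variable {p : ℝ≥0∞} [Fact (1 ≤ p)]


lemma hp_ne_zero : p ≠ 0 := (zero_lt_one.trans_le (Fact.out : 1 ≤ p)).ne'

lemma ptop_or_pos : p = ∞ ∨ 0 < p.toReal := by
  rcases eq_or_ne p ∞ with h | h
  · exact Or.inl h
  · exact Or.inr (ENNReal.toReal_pos hp_ne_zero h)

lemma memℓp_of_fin_supp {f : ℤ → ℂ} {F : Finset ℤ} (h : ∀ j ∉ F, f j = 0) :
    Memℓp f p := by
  refine (memℓp_zero ?_).of_exponent_ge (zero_le : (0 : ℝ≥0∞) ≤ p)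
  exact (F.finite_toSet).subset (fun j hj => by by_contra hc; exact hj (h j hc))

/-- the shift of an `lp` element. -/
def shiftFun (s : ℤ) (f : ℤ → ℂ) : ℤ → ℂ := fun j => f (j - s)

lemma memℓp_shift (s : ℤ) (f : ℤ → ℂ) (hf : Memℓp f p) : Memℓp (shiftFun s f) p := by
  rcases ptop_or_pos (p := p) with h | h
  · subst h
    refine memℓp_infty ?_
    obtain ⟨C, hC⟩ := hf.bddAbove
    refine ⟨C, ?_⟩
    rintro x ⟨j, rfl⟩
    exact hC ⟨j - s, rfl⟩
  · refine memℓp_gen ?_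
    have := (hf.summable h)
    have : Summable ((fun i => ‖f i‖ ^ p.toReal) ∘ (Equiv.subRight s)) :=
      (Equiv.summable_iff (Equiv.subRight s)).2 this
    exact this

def shiftLp (s : ℤ) (f : lp (fun _ : ℤ => ℂ) p) : lp (fun _ : ℤ => ℂ) p :=
  ⟨shiftFun s f, memℓp_shift s f (lp.memℓp f)⟩

@[simp] lemma shiftLp_apply (s : ℤ) (f : lp (fun _ : ℤ => ℂ) p) (j : ℤ) :
    (shiftLp s f : ℤ → ℂ) j = f (j - s) := rfl

lemma norm_shiftLp (s : ℤ) (f : lp (fun _ : ℤ => ℂ) p) : ‖shiftLp s f‖ = ‖f‖ := by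
  rcases ptop_or_pos (p := p) with h | h
  · subst h
    rw [lp.norm_eq_ciSup, lp.norm_eq_ciSup]
    exact (Equiv.subRight s).iSup_congr (fun j => rfl)
  · rw [lp.norm_eq_tsum_rpow h, lp.norm_eq_tsum_rpow h]
    congr 1
    exact (Equiv.subRight s).tsum_eq (fun i => ‖f i‖ ^ p.toReal)

/-- `lp.single` with the pi type pinned. -/
def singZ (p : ℝ≥0∞) (i : ℤ) (a : ℂ) : lp (fun _ : ℤ => ℂ) p :=
  lp.single (E := fun _ : ℤ => ℂ) p i a

lemma singZ_apply_self (i : ℤ) (a : ℂ) : (singZ p i a : ℤ → ℂ) i = a :=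
  lp.single_apply_self (E := fun _ : ℤ => ℂ) p i a

lemma singZ_apply_ne (i : ℤ) (a : ℂ) {j : ℤ} (h : j ≠ i) : (singZ p i a : ℤ → ℂ) j = 0 :=
  lp.single_apply_ne (E := fun _ : ℤ => ℂ) p i a h

lemma singZ_apply (i : ℤ) (a : ℂ) (j : ℤ) :
    (singZ p i a : ℤ → ℂ) j = if j = i then a else 0 := by
  by_cases hj : j = i
  · subst hj; rw [singZ_apply_self, if_pos rfl]
  · rw [singZ_apply_ne i _ hj, if_neg hj]

lemma norm_singZ_le (i : ℤ) (a : ℂ) : ‖singZ p i a‖ ≤ ‖a‖ := by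
  rcases ptop_or_pos (p := p) with hp | hp
  · subst hp
    refine lp.norm_le_of_forall_le (norm_nonneg _) (fun j => ?_)
    rw [singZ_apply]
    by_cases hj : j = i
    · rw [if_pos hj]
    · rw [if_neg hj]; simp
  · exact le_of_eq (lp.norm_single (E := fun _ : ℤ => ℂ) (ENNReal.toReal_pos_iff.mp hp).1 i a)

lemma norm_le_sum_of_fin_supp (f : lp (fun _ : ℤ => ℂ) p) (F : Finset ℤ)
    (h : ∀ j ∉ F, (f : ℤ → ℂ) j = 0) : ‖f‖ ≤ ∑ j ∈ F, ‖(f : ℤ → ℂ) j‖ := by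
  have hf : f = ∑ i ∈ F, singZ p i ((f : ℤ → ℂ) i) := by
    ext j
    rw [lp.coeFn_sum, Finset.sum_apply]
    rw [Finset.sum_congr rfl (fun i (_ : i ∈ F) => singZ_apply i ((f : ℤ → ℂ) i) j),
      Finset.sum_ite_eq F j (fun i => (f : ℤ → ℂ) i)]
    by_cases hj : j ∈ F
    · simp [hj]
    · simp [hj, h j hj]
  calc ‖f‖ = ‖∑ i ∈ F, singZ p i ((f : ℤ → ℂ) i)‖ := by rw [← hf]
    _ ≤ ∑ i ∈ F, ‖singZ p i ((f : ℤ → ℂ) i)‖ := norm_sum_le _ _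
    _ ≤ ∑ j ∈ F, ‖(f : ℤ → ℂ) j‖ :=
        Finset.sum_le_sum (fun i _ => norm_singZ_le i _)

lemma sum_singZ_apply (F : Finset ℤ) (g : ℤ → ℂ) (j : ℤ) :
    ((∑ i ∈ F, singZ p i (g i) : lp (fun _ : ℤ => ℂ) p) : ℤ → ℂ) j
      = if j ∈ F then g j else 0 := by
  rw [lp.coeFn_sum, Finset.sum_apply,
    Finset.sum_congr rfl (fun i (_ : i ∈ F) => singZ_apply i (g i) j),
    Finset.sum_ite_eq F j (fun i => g i)]

lemma finApprox (hp : p ≠ ∞) (x : lp (fun _ : ℤ => ℂ) p) {δ : ℝ} (hδ : 0 < δ) :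
    ∃ (x' : lp (fun _ : ℤ => ℂ) p) (l r : ℤ), l ≤ r ∧
      (∀ j ∉ Finset.Icc l r, (x' : ℤ → ℂ) j = 0) ∧ ‖x - x'‖ ≤ δ := by
  have hs := lp.hasSum_single hp x
  have h2 := Metric.tendsto_nhds.mp hs δ hδ
  rw [show (SummationFilter.unconditional ℤ).filter = Filter.atTop from rfl, Filter.eventually_atTop] at h2
  obtain ⟨F₀, hF₀⟩ := h2
  set F : Finset ℤ := F₀ ∪ {0} with hF
  have h0 : (0 : ℤ) ∈ F := by simp [hF]
  have hd := hF₀ F Finset.subset_union_left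
  have hl : F.min' ⟨0, h0⟩ ≤ F.max' ⟨0, h0⟩ :=
    le_trans (F.min'_le 0 h0) (F.le_max' 0 h0)
  refine ⟨∑ i ∈ F, singZ p i ((x : ℤ → ℂ) i), F.min' ⟨0, h0⟩, F.max' ⟨0, h0⟩, hl, ?_, ?_⟩
  · intro j hj
    rw [sum_singZ_apply, if_neg]
    intro hjF
    exact hj (Finset.mem_Icc.2 ⟨F.min'_le j hjF, F.le_max' j hjF⟩)
  · rw [← dist_eq_norm, dist_comm]
    exact le_of_lt hd

lemma shiftSum (g : ℤ → ℝ) (a b c : ℤ) :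
    ∑ j ∈ Finset.Icc a b, g (j + c) = ∑ j ∈ Finset.Icc (a + c) (b + c), g j := by
  rw [← Finset.map_add_right_Icc a b c, Finset.sum_map]
  rfl


/-- Core transfer lemma: a finitely supported vector acted on by any tridiagonal operator
over `(U,V,W)` can be approximately reproduced, after a shift, by a pseudoergodic operator. -/
lemma core_transfer {U V W : Set ℂ} {u v w : ℤ → ℂ}
    (hPE : PseudoergodicZ U V W u v w)
    {A : SeqZ p →L[ℂ] SeqZ p} (hA : BiActs A u v w)
    {bu bv bw : ℤ → ℂ} (hB : RangesIn U V W bu bv bw)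
    {B : SeqZ p →L[ℂ] SeqZ p} (hBacts : BiActs B bu bv bw)
    (x : SeqZ p) (l r : ℤ) (hlr : l ≤ r)
    (hsupp : ∀ j ∉ Finset.Icc l r, (x : ∀ _ : ℤ, ℂ) j = 0)
    {ε : ℝ} (hε : 0 < ε) :
    ∃ y z : SeqZ p, ‖y‖ = ‖x‖ ∧ ‖z‖ = ‖B x‖ ∧
      ‖A y - z‖ ≤ 3 * ε * ∑ j ∈ Finset.Icc (l - 2) (r + 2), ‖(x : ∀ _ : ℤ, ℂ) j‖ := by
  classical
  set n : ℕ := (r - l + 3).toNat with hn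
  obtain ⟨k, hk⟩ := hPE n (fun i => bu (l - 1 + (i : ℕ))) (fun i => bv (l - 1 + (i : ℕ)))
    (fun i => bw (l - 1 + (i : ℕ)))
    ⟨fun i => hB.1 _, fun i => hB.2.1 _, fun i => hB.2.2 _⟩ ε hε
  set s : ℤ := k - (l - 1) with hs
  have key : ∀ j : ℤ, l - 1 ≤ j → j ≤ r + 1 →
      ‖u (j + s) - bu j‖ < ε ∧ ‖v (j + s) - bv j‖ < ε ∧ ‖w (j + s) - bw j‖ < ε := by
    intro j hj1 hj2
    have hin : (j - (l - 1)).toNat < n := by omega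
    have h := hk ⟨(j - (l - 1)).toNat, hin⟩
    have e1 : (k : ℤ) + (((j - (l - 1)).toNat : ℕ) : ℤ) = j + s := by omega
    have e2 : (l - 1 : ℤ) + (((j - (l - 1)).toNat : ℕ) : ℤ) = j := by omega
    simpa only [Fin.val_mk, e1, e2] using h
  set y : SeqZ p := shiftLp s x with hy
  set z : SeqZ p := shiftLp s (B x) with hz
  set d : SeqZ p := A y - z with hd
  have hdc : ∀ j : ℤ, (d : ∀ _ : ℤ, ℂ) (j + s) =
      (u (j + s) - bu j) * (x : ∀ _ : ℤ, ℂ) (j - 1)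
        + (v (j + s) - bv j) * (x : ∀ _ : ℤ, ℂ) j
        + (w (j + s) - bw j) * (x : ∀ _ : ℤ, ℂ) (j + 1) := by
    intro j
    have h1 : (d : ∀ _ : ℤ, ℂ) (j + s)
        = (A y : ∀ _ : ℤ, ℂ) (j + s) - (z : ∀ _ : ℤ, ℂ) (j + s) := by
      rw [hd, lp.coeFn_sub, Pi.sub_apply]
    have e1 : j + s - 1 - s = j - 1 := by ring
    have e2 : j + s - s = j := by ring
    have e3 : j + s + 1 - s = j + 1 := by ring
    rw [h1, hA y (j + s), hz]
    simp only [hy, shiftLp_apply, e1, e2, e3]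
    rw [hBacts x j]
    ring
  have hvan : ∀ i' ∉ Finset.Icc (l - 1 + s) (r + 1 + s), (d : ∀ _ : ℤ, ℂ) i' = 0 := by
    intro i' hi'
    rw [Finset.mem_Icc] at hi'
    have h0 : (d : ∀ _ : ℤ, ℂ) ((i' - s) + s) = 0 := by
      rw [hdc (i' - s)]
      have h1 : (x : ∀ _ : ℤ, ℂ) (i' - s - 1) = 0 := by
        refine hsupp _ ?_; rw [Finset.mem_Icc]; omega
      have h2 : (x : ∀ _ : ℤ, ℂ) (i' - s) = 0 := by
        refine hsupp _ ?_; rw [Finset.mem_Icc]; omega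
      have h3 : (x : ∀ _ : ℤ, ℂ) (i' - s + 1) = 0 := by
        refine hsupp _ ?_; rw [Finset.mem_Icc]; omega
      rw [h1, h2, h3]; ring
    simpa only [sub_add_cancel] using h0
  have hb := norm_le_sum_of_fin_supp d (Finset.Icc (l - 1 + s) (r + 1 + s)) hvan
  have hsum : ∑ i' ∈ Finset.Icc (l - 1 + s) (r + 1 + s), ‖(d : ∀ _ : ℤ, ℂ) i'‖
      = ∑ j ∈ Finset.Icc (l - 1) (r + 1), ‖(d : ∀ _ : ℤ, ℂ) (j + s)‖ :=
    (shiftSum (fun i' => ‖(d : ∀ _ : ℤ, ℂ) i'‖) (l - 1) (r + 1) s).symm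
  have hterm : ∀ j ∈ Finset.Icc (l - 1) (r + 1), ‖(d : ∀ _ : ℤ, ℂ) (j + s)‖ ≤
      ε * ‖(x : ∀ _ : ℤ, ℂ) (j - 1)‖ + ε * ‖(x : ∀ _ : ℤ, ℂ) j‖
        + ε * ‖(x : ∀ _ : ℤ, ℂ) (j + 1)‖ := by
    intro j hj
    rw [Finset.mem_Icc] at hj
    obtain ⟨h1, h2, h3⟩ := key j hj.1 hj.2
    rw [hdc j]
    refine le_trans (norm_add₃_le) ?_
    rw [norm_mul, norm_mul, norm_mul]
    refine add_le_add (add_le_add ?_ ?_) ?_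
    · exact mul_le_mul_of_nonneg_right h1.le (norm_nonneg _)
    · exact mul_le_mul_of_nonneg_right h2.le (norm_nonneg _)
    · exact mul_le_mul_of_nonneg_right h3.le (norm_nonneg _)
  have hshle : ∀ c : ℤ, -1 ≤ c → c ≤ 1 →
      ∑ j ∈ Finset.Icc (l - 1) (r + 1), ‖(x : ∀ _ : ℤ, ℂ) (j + c)‖
        ≤ ∑ j ∈ Finset.Icc (l - 2) (r + 2), ‖(x : ∀ _ : ℤ, ℂ) j‖ := by
    intro c hc1 hc2
    rw [shiftSum (fun t => ‖(x : ∀ _ : ℤ, ℂ) t‖) (l - 1) (r + 1) c]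
    exact Finset.sum_le_sum_of_subset_of_nonneg
      (Finset.Icc_subset_Icc (by omega) (by omega)) (fun _ _ _ => norm_nonneg _)
  refine ⟨y, z, norm_shiftLp s x, norm_shiftLp s (B x), ?_⟩
  rw [← hd]
  refine le_trans hb ?_
  rw [hsum]
  refine le_trans (Finset.sum_le_sum hterm) ?_
  rw [Finset.sum_add_distrib, Finset.sum_add_distrib, ← Finset.mul_sum, ← Finset.mul_sum,
    ← Finset.mul_sum]
  have e1 : ∀ j : ℤ, j - 1 = j + (-1) := fun j => by ring
  have e0 : ∀ j : ℤ, j = j + 0 := fun j => by ring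
  calc ε * ∑ j ∈ Finset.Icc (l - 1) (r + 1), ‖(x : ∀ _ : ℤ, ℂ) (j - 1)‖
        + ε * ∑ j ∈ Finset.Icc (l - 1) (r + 1), ‖(x : ∀ _ : ℤ, ℂ) j‖
        + ε * ∑ j ∈ Finset.Icc (l - 1) (r + 1), ‖(x : ∀ _ : ℤ, ℂ) (j + 1)‖
      ≤ ε * ∑ j ∈ Finset.Icc (l - 2) (r + 2), ‖(x : ∀ _ : ℤ, ℂ) j‖
        + ε * ∑ j ∈ Finset.Icc (l - 2) (r + 2), ‖(x : ∀ _ : ℤ, ℂ) j‖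
        + ε * ∑ j ∈ Finset.Icc (l - 2) (r + 2), ‖(x : ∀ _ : ℤ, ℂ) j‖ := by
        refine add_le_add (add_le_add ?_ ?_) ?_ <;> refine mul_le_mul_of_nonneg_left ?_ hε.le
        · calc ∑ j ∈ Finset.Icc (l - 1) (r + 1), ‖(x : ∀ _ : ℤ, ℂ) (j - 1)‖
              = ∑ j ∈ Finset.Icc (l - 1) (r + 1), ‖(x : ∀ _ : ℤ, ℂ) (j + (-1))‖ := by
                refine Finset.sum_congr rfl (fun j _ => by rw [← e1 j])
            _ ≤ _ := hshle (-1) (by omega) (by omega)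
        · calc ∑ j ∈ Finset.Icc (l - 1) (r + 1), ‖(x : ∀ _ : ℤ, ℂ) j‖
              = ∑ j ∈ Finset.Icc (l - 1) (r + 1), ‖(x : ∀ _ : ℤ, ℂ) (j + 0)‖ := by
                refine Finset.sum_congr rfl (fun j _ => by rw [← e0 j])
            _ ≤ _ := hshle 0 (by omega) (by omega)
        · exact hshle 1 (by omega) (by omega)

    _ = 3 * ε * ∑ j ∈ Finset.Icc (l - 2) (r + 2), ‖(x : ∀ _ : ℤ, ℂ) j‖ := by ring

/-- Step 1: the bound on finitely supported vectors. -/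
lemma step1_bound {U V W : Set ℂ} {u v w bu bv bw : ℤ → ℂ}
    (hPE : PseudoergodicZ U V W u v w)
    {A : SeqZ p →L[ℂ] SeqZ p} (hA : BiActs A u v w)
    (hB : RangesIn U V W bu bv bw)
    {B : SeqZ p →L[ℂ] SeqZ p} (hBacts : BiActs B bu bv bw)
    (x : SeqZ p) (l r : ℤ) (hlr : l ≤ r)
    (hsupp : ∀ j ∉ Finset.Icc l r, (x : ∀ _ : ℤ, ℂ) j = 0) :
    ‖B x‖ ≤ ‖A‖ * ‖x‖ := by
  refine le_of_forall_pos_le_add (fun γ hγ => ?_)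
  set S := ∑ j ∈ Finset.Icc (l - 2) (r + 2), ‖(x : ∀ _ : ℤ, ℂ) j‖ with hS
  have hS0 : 0 ≤ S := Finset.sum_nonneg (fun _ _ => norm_nonneg _)
  set ε := γ / (3 * (S + 1)) with hε
  have hεpos : 0 < ε := div_pos hγ (by linarith)
  obtain ⟨y, z, hyn, hzn, hd⟩ := core_transfer hPE hA hB hBacts x l r hlr hsupp hεpos
  have h3ε : 3 * ε * S ≤ γ := by
    have h1 : 3 * ε * (S + 1) = γ := by rw [hε]; field_simp
    nlinarith
  have h1 : ‖B x‖ ≤ ‖A y‖ + 3 * ε * S := by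
    have h2 : ‖z‖ - ‖A y‖ ≤ ‖A y - z‖ := by
      rw [norm_sub_rev]; exact norm_sub_norm_le _ _
    have := le_trans h2 hd
    linarith [hzn ▸ this]
  have h2 : ‖A y‖ ≤ ‖A‖ * ‖x‖ := by
    calc ‖A y‖ ≤ ‖A‖ * ‖y‖ := A.le_opNorm y
      _ = ‖A‖ * ‖x‖ := by rw [hyn]
  linarith

/-- Any operator in `M(U,V,W)` is dominated in norm by any pseudoergodic operator. -/
lemma norm_le_of_pe {U V W : Set ℂ} {u v w bu bv bw : ℤ → ℂ}
    (hPE : PseudoergodicZ U V W u v w)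
    {A : SeqZ p →L[ℂ] SeqZ p} (hA : BiActs A u v w)
    (hB : RangesIn U V W bu bv bw)
    {B : SeqZ p →L[ℂ] SeqZ p} (hBacts : BiActs B bu bv bw) :
    ‖B‖ ≤ ‖A‖ := by
  refine B.opNorm_le_bound (norm_nonneg A) (fun x => ?_)
  rcases ptop_or_pos (p := p) with hp | hp
  · -- p = ∞ : locality argument
    subst hp
    refine lp.norm_le_of_forall_le (mul_nonneg (norm_nonneg A) (norm_nonneg x)) (fun i => ?_)
    have hgsupp : ∀ j ∉ Finset.Icc (i - 1) (i + 1),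
        (if j ∈ Finset.Icc (i - 1) (i + 1) then (x : ∀ _ : ℤ, ℂ) j else 0) = 0 :=
      fun j hj => if_neg hj
    set x' : SeqZ ∞ :=
      ⟨fun j => if j ∈ Finset.Icc (i - 1) (i + 1) then (x : ∀ _ : ℤ, ℂ) j else 0,
        memℓp_of_fin_supp (p := ∞) hgsupp⟩ with hx'
    have hx'c : ∀ j, (x' : ∀ _ : ℤ, ℂ) j
        = if j ∈ Finset.Icc (i - 1) (i + 1) then (x : ∀ _ : ℤ, ℂ) j else 0 := fun j => rfl
    have hbi : (B x : ∀ _ : ℤ, ℂ) i = (B x' : ∀ _ : ℤ, ℂ) i := by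
      rw [hBacts x i, hBacts x' i, hx'c, hx'c, hx'c]
      simp only [Finset.mem_Icc]
      rw [if_pos (by omega), if_pos (by omega), if_pos (by omega)]
    have hx'n : ‖x'‖ ≤ ‖x‖ := by
      refine lp.norm_le_of_forall_le (norm_nonneg x) (fun j => ?_)
      rw [hx'c]
      by_cases hj : j ∈ Finset.Icc (i - 1) (i + 1)
      · rw [if_pos hj]; exact lp.norm_apply_le_norm ENNReal.top_ne_zero x j
      · rw [if_neg hj, norm_zero]; exact norm_nonneg x
    calc ‖(B x : ∀ _ : ℤ, ℂ) i‖ = ‖(B x' : ∀ _ : ℤ, ℂ) i‖ := by rw [hbi]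
      _ ≤ ‖B x'‖ := lp.norm_apply_le_norm ENNReal.top_ne_zero (B x') i
      _ ≤ ‖A‖ * ‖x'‖ := step1_bound hPE hA hB hBacts x' (i - 1) (i + 1) (by omega) hgsupp
      _ ≤ ‖A‖ * ‖x‖ := mul_le_mul_of_nonneg_left hx'n (norm_nonneg A)
  · -- p < ∞ : density argument
    have hptop : p ≠ ∞ := by
      intro h; rw [h] at hp; simp at hp
    refine le_of_forall_pos_le_add (fun γ hγ => ?_)
    set δ := γ / (‖A‖ + ‖B‖ + 1) with hδ
    have hδpos : 0 < δ := div_pos hγ (by positivity)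
    obtain ⟨x', l, r, hlr, hsupp, hclose⟩ := finApprox hptop x hδpos
    have h1 : ‖B x‖ ≤ ‖B x'‖ + ‖B‖ * δ := by
      have hBsub : ‖B x - B x'‖ ≤ ‖B‖ * δ := by
        rw [← map_sub]
        exact le_trans (B.le_opNorm _) (mul_le_mul_of_nonneg_left hclose (norm_nonneg B))
      calc ‖B x‖ = ‖B x' + (B x - B x')‖ := by rw [add_sub_cancel]
        _ ≤ ‖B x'‖ + ‖B x - B x'‖ := norm_add_le _ _
        _ ≤ ‖B x'‖ + ‖B‖ * δ := add_le_add (le_refl _) hBsub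
    have h2 : ‖x'‖ ≤ ‖x‖ + δ := by
      have : ‖x'‖ - ‖x‖ ≤ ‖x - x'‖ := by
        rw [norm_sub_rev]; exact norm_sub_norm_le _ _
      linarith
    have h3 : (‖A‖ + ‖B‖) * δ ≤ γ := by
      have h4 : (‖A‖ + ‖B‖ + 1) * δ = γ := by rw [hδ]; field_simp
      nlinarith [norm_nonneg A, norm_nonneg B]
    calc ‖B x‖ ≤ ‖B x'‖ + ‖B‖ * δ := h1
      _ ≤ ‖A‖ * ‖x'‖ + ‖B‖ * δ := by
          gcongr
          exact step1_bound hPE hA hB hBacts x' l r hlr hsupp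
      _ ≤ ‖A‖ * (‖x‖ + δ) + ‖B‖ * δ := by
          gcongr
      _ = ‖A‖ * ‖x‖ + (‖A‖ + ‖B‖) * δ := by ring
      _ ≤ ‖A‖ * ‖x‖ + γ := by linarith

/-- The "tent function" cut-off approximation in `ℓ^∞`. -/
lemma tent_approx (hp : p = ∞) {bu bv bw : ℤ → ℂ}
    {B : SeqZ p →L[ℂ] SeqZ p} (hBacts : BiActs B bu bv bw)
    {cu cw : ℝ} (hcu : ∀ j, ‖bu j‖ ≤ cu) (hcw : ∀ j, ‖bw j‖ ≤ cw)
    (x : SeqZ p) {γ₁ : ℝ} (hγ₁ : 0 < γ₁) :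
    ∃ (x' : SeqZ p) (l r : ℤ), l ≤ r ∧ (∀ j ∉ Finset.Icc l r, (x' : ∀ _ : ℤ, ℂ) j = 0) ∧
      ‖x‖ ≤ ‖x'‖ + γ₁ ∧ ‖B x'‖ ≤ ‖B x‖ + γ₁ := by
  subst hp
  have hcu0 : 0 ≤ cu := le_trans (norm_nonneg _) (hcu 0)
  have hcw0 : 0 ≤ cw := le_trans (norm_nonneg _) (hcw 0)
  have hlt : ‖x‖ - γ₁ < ⨆ i, ‖(x : ∀ _ : ℤ, ℂ) i‖ := by
    rw [← lp.norm_eq_ciSup]; linarith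
  obtain ⟨i₀, hi₀⟩ := exists_lt_of_lt_ciSup hlt
  obtain ⟨m₀, hm₀⟩ := exists_nat_gt ((cu + cw) * ‖x‖ / γ₁)
  set m : ℕ := m₀ + 1 with hm
  have hmpos : (0 : ℝ) < (m : ℝ) := by positivity
  have hmR : (cu + cw) * ‖x‖ ≤ γ₁ * (m : ℝ) := by
    have h1 : (cu + cw) * ‖x‖ / γ₁ < (m : ℝ) := by
      have : (m₀ : ℝ) ≤ (m : ℝ) := by exact_mod_cast Nat.le_succ m₀
      linarith
    calc (cu + cw) * ‖x‖ = ((cu + cw) * ‖x‖ / γ₁) * γ₁ :=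
        (div_mul_cancel₀ _ hγ₁.ne').symm
      _ ≤ (m : ℝ) * γ₁ := mul_le_mul_of_nonneg_right h1.le hγ₁.le
      _ = γ₁ * (m : ℝ) := by ring
  set φ : ℤ → ℝ := fun j => max 0 (1 - |(j : ℝ) - (i₀ : ℝ)| / m) with hφ
  have hφ0 : ∀ j, 0 ≤ φ j := fun j => le_max_left _ _
  have hφ1 : ∀ j, φ j ≤ 1 := fun j =>
    max_le zero_le_one (sub_le_self _ (by positivity))
  have hφi₀ : φ i₀ = 1 := by
    simp only [hφ, sub_self, abs_zero, zero_div, sub_zero]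
    exact max_eq_right zero_le_one
  have hlip : ∀ a b : ℤ, |φ a - φ b| ≤ |(a : ℝ) - (b : ℝ)| / m := by
    intro a b
    have h1 : |φ a - φ b| ≤
        |(1 - |(a : ℝ) - (i₀ : ℝ)| / m) - (1 - |(b : ℝ) - (i₀ : ℝ)| / m)| := by
      rw [hφ]
      simp only
      rw [max_comm 0 (1 - |(a : ℝ) - (i₀ : ℝ)| / m), max_comm 0 (1 - |(b : ℝ) - (i₀ : ℝ)| / m)]
      exact abs_max_sub_max_le_abs _ _ _
    have h2 : (1 - |(a : ℝ) - (i₀ : ℝ)| / m) - (1 - |(b : ℝ) - (i₀ : ℝ)| / m)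
        = (|(b : ℝ) - (i₀ : ℝ)| - |(a : ℝ) - (i₀ : ℝ)|) / m := by ring
    rw [h2] at h1
    refine le_trans h1 ?_
    rw [abs_div, abs_of_pos hmpos]
    have h3 : |(|(b : ℝ) - (i₀ : ℝ)| - |(a : ℝ) - (i₀ : ℝ)|)|
        ≤ |(a : ℝ) - (b : ℝ)| := by
      refine le_trans (abs_abs_sub_abs_le_abs_sub _ _) ?_
      have : ((b : ℝ) - (i₀ : ℝ)) - ((a : ℝ) - (i₀ : ℝ)) = (b : ℝ) - (a : ℝ) := by ring
      rw [this, abs_sub_comm]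
    exact (div_le_div_iff_of_pos_right hmpos).2 h3
  have hφsupp : ∀ j ∉ Finset.Icc (i₀ - (m : ℤ)) (i₀ + (m : ℤ)), φ j = 0 := by
    intro j hj
    rw [Finset.mem_Icc] at hj
    have hj' : (m : ℤ) ≤ j - i₀ ∨ (m : ℤ) ≤ -(j - i₀) := by omega
    have habs : (m : ℝ) ≤ |(j : ℝ) - (i₀ : ℝ)| := by
      have h1 : ((j : ℝ) - (i₀ : ℝ)) = ((j - i₀ : ℤ) : ℝ) := by push_cast; ring
      rw [h1, ← Int.cast_abs]
      have h2 : (m : ℤ) ≤ |j - i₀| := by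
        rcases hj' with h | h
        · exact le_trans h (le_abs_self _)
        · exact le_trans h (neg_le_abs _)
      exact_mod_cast h2
    have hneg : 1 - |(j : ℝ) - (i₀ : ℝ)| / m ≤ 0 := by
      have h3 : (m : ℝ) / m ≤ |(j : ℝ) - (i₀ : ℝ)| / m :=
        (div_le_div_iff_of_pos_right hmpos).2 habs
      rw [div_self hmpos.ne'] at h3
      linarith
    exact max_eq_left hneg
  have hgsupp : ∀ j ∉ Finset.Icc (i₀ - (m : ℤ)) (i₀ + (m : ℤ)),
      (fun j => ((φ j : ℝ) : ℂ) * (x : ∀ _ : ℤ, ℂ) j) j = 0 := by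
    intro j hj
    simp only [hφsupp j hj, Complex.ofReal_zero, zero_mul]
  set x' : SeqZ ∞ := ⟨fun j => ((φ j : ℝ) : ℂ) * (x : ∀ _ : ℤ, ℂ) j,
    memℓp_of_fin_supp (p := ∞) hgsupp⟩ with hx'
  have hc : ∀ j, (x' : ∀ _ : ℤ, ℂ) j = ((φ j : ℝ) : ℂ) * (x : ∀ _ : ℤ, ℂ) j := fun j => rfl
  refine ⟨x', i₀ - (m : ℤ), i₀ + (m : ℤ), by omega, hgsupp, ?_, ?_⟩
  · have h1 := lp.norm_apply_le_norm ENNReal.top_ne_zero x' i₀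
    rw [hc i₀, hφi₀] at h1
    simp only [Complex.ofReal_one, one_mul] at h1
    linarith
  · refine lp.norm_le_of_forall_le (add_nonneg (norm_nonneg _) hγ₁.le) (fun i => ?_)
    have hre : (B x' : ∀ _ : ℤ, ℂ) i
        = ((φ i : ℝ) : ℂ) * (B x : ∀ _ : ℤ, ℂ) i
          + bu i * (((φ (i - 1) - φ i : ℝ)) : ℂ) * (x : ∀ _ : ℤ, ℂ) (i - 1)
          + bw i * (((φ (i + 1) - φ i : ℝ)) : ℂ) * (x : ∀ _ : ℤ, ℂ) (i + 1) := by
      rw [hBacts x' i, hBacts x i, hc, hc, hc]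
      push_cast
      ring
    have hbound : ∀ j : ℤ, ‖(x : ∀ _ : ℤ, ℂ) j‖ ≤ ‖x‖ :=
      fun j => lp.norm_apply_le_norm ENNReal.top_ne_zero x j
    have hlip1 : |φ (i - 1) - φ i| ≤ 1 / m := by
      have := hlip (i - 1) i
      have he : |((i - 1 : ℤ) : ℝ) - (i : ℝ)| = 1 := by push_cast; simp
      rw [he] at this
      exact this
    have hlip2 : |φ (i + 1) - φ i| ≤ 1 / m := by
      have := hlip (i + 1) i
      have he : |((i + 1 : ℤ) : ℝ) - (i : ℝ)| = 1 := by push_cast; simp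
      rw [he] at this
      exact this
    calc ‖(B x' : ∀ _ : ℤ, ℂ) i‖
        ≤ ‖((φ i : ℝ) : ℂ) * (B x : ∀ _ : ℤ, ℂ) i‖
          + ‖bu i * (((φ (i - 1) - φ i : ℝ)) : ℂ) * (x : ∀ _ : ℤ, ℂ) (i - 1)‖
          + ‖bw i * (((φ (i + 1) - φ i : ℝ)) : ℂ) * (x : ∀ _ : ℤ, ℂ) (i + 1)‖ := by
          rw [hre]; exact norm_add₃_le
      _ ≤ 1 * ‖B x‖ + cu * (1 / m) * ‖x‖ + cw * (1 / m) * ‖x‖ := by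
          refine add_le_add (add_le_add ?_ ?_) ?_
          · rw [norm_mul, Complex.norm_real]
            refine mul_le_mul ?_ (lp.norm_apply_le_norm ENNReal.top_ne_zero (B x) i)
              (norm_nonneg _) zero_le_one
            rw [Real.norm_eq_abs, abs_of_nonneg (hφ0 i)]
            exact hφ1 i
          · rw [norm_mul, norm_mul, Complex.norm_real, Real.norm_eq_abs]
            refine mul_le_mul (mul_le_mul (hcu i) hlip1 (abs_nonneg _) hcu0)
              (hbound _) (norm_nonneg _) (by positivity)
          · rw [norm_mul, norm_mul, Complex.norm_real, Real.norm_eq_abs]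
            refine mul_le_mul (mul_le_mul (hcw i) hlip2 (abs_nonneg _) hcw0)
              (hbound _) (norm_nonneg _) (by positivity)
      _ = ‖B x‖ + (cu + cw) * ‖x‖ / m := by ring
      _ ≤ ‖B x‖ + γ₁ := by
          have : (cu + cw) * ‖x‖ / m ≤ γ₁ := (div_le_iff₀ hmpos).2 (by linarith)
          linarith


/-- If both a pseudoergodic `A` and an arbitrary `B ∈ M(U,V,W)` are invertible, the norm of
the inverse of `B` is dominated by the norm of the inverse of `A`. -/
lemma inv_norm_le_of_pe {U V W : Set ℂ} {u v w bu bv bw : ℤ → ℂ}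
    (hPE : PseudoergodicZ U V W u v w)
    {A : SeqZ p →L[ℂ] SeqZ p} (hA : BiActs A u v w) (hAu : IsUnit A)
    (hB : RangesIn U V W bu bv bw)
    {B : SeqZ p →L[ℂ] SeqZ p} (hBacts : BiActs B bu bv bw) (hBu : IsUnit B)
    {cu cw : ℝ} (hcu : ∀ j, ‖bu j‖ ≤ cu) (hcw : ∀ j, ‖bw j‖ ≤ cw) :
    ‖Ring.inverse B‖ ≤ ‖Ring.inverse A‖ := by
  set K := ‖Ring.inverse A‖ with hK
  have hK0 : (0 : ℝ) ≤ K := norm_nonneg _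
  have key : ∀ x : SeqZ p, ‖x‖ ≤ K * ‖B x‖ := by
    intro x
    refine le_of_forall_pos_le_add (fun γ hγ => ?_)
    set γ₁ := γ / (2 * K + 1) with hγ₁
    have hγ₁p : 0 < γ₁ := div_pos hγ (by linarith)
    have happrox : ∃ (x' : SeqZ p) (l r : ℤ), l ≤ r ∧
        (∀ j ∉ Finset.Icc l r, (x' : ∀ _ : ℤ, ℂ) j = 0) ∧
        ‖x‖ ≤ ‖x'‖ + γ₁ ∧ ‖B x'‖ ≤ ‖B x‖ + γ₁ := by
      rcases ptop_or_pos (p := p) with hp | hp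
      · exact tent_approx hp hBacts hcu hcw x hγ₁p
      · have hptop : p ≠ ∞ := by intro h; rw [h] at hp; simp at hp
        set δ := γ₁ / (‖B‖ + 1) with hδ
        have hδpos : 0 < δ := div_pos hγ₁p (by positivity)
        have heq : (‖B‖ + 1) * δ = γ₁ := by
          rw [hδ]; field_simp
        have hδγ : δ ≤ γ₁ := by nlinarith [norm_nonneg B, hδpos.le]
        obtain ⟨x', l, r, hlr, hsupp, hclose⟩ := finApprox hptop x hδpos
        refine ⟨x', l, r, hlr, hsupp, ?_, ?_⟩
        · have h2 : ‖x‖ - ‖x'‖ ≤ ‖x - x'‖ := norm_sub_norm_le _ _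
          linarith [le_trans h2 hclose]
        · have hBsub : ‖B x' - B x‖ ≤ ‖B‖ * δ := by
            rw [← map_sub]
            exact le_trans (B.le_opNorm _)
              (by rw [norm_sub_rev]
                  exact mul_le_mul_of_nonneg_left hclose (norm_nonneg B))
          have h3 : ‖B x'‖ - ‖B x‖ ≤ ‖B x' - B x‖ := norm_sub_norm_le _ _
          have h4 : ‖B‖ * δ ≤ γ₁ := by nlinarith [hδpos.le]
          linarith [le_trans h3 hBsub]
    obtain ⟨x', l, r, hlr, hsupp, hx1, hx2⟩ := happrox
    set S := ∑ j ∈ Finset.Icc (l - 2) (r + 2), ‖(x' : ∀ _ : ℤ, ℂ) j‖ with hS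
    have hS0 : 0 ≤ S := Finset.sum_nonneg (fun _ _ => norm_nonneg _)
    set ε := γ₁ / (3 * (S + 1)) with hε
    have hεpos : 0 < ε := div_pos hγ₁p (by linarith)
    obtain ⟨y, z, hyn, hzn, hd⟩ := core_transfer hPE hA hB hBacts x' l r hlr hsupp hεpos
    have h3ε : 3 * ε * S ≤ γ₁ := by
      have h1 : 3 * ε * (S + 1) = γ₁ := by rw [hε]; field_simp
      nlinarith
    have hAy : ‖A y‖ ≤ ‖B x'‖ + γ₁ := by
      have h2 : ‖A y‖ - ‖z‖ ≤ ‖A y - z‖ := norm_sub_norm_le _ _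
      have := le_trans h2 hd
      rw [hzn] at h2
      linarith [hzn ▸ (le_trans h2 hd)]
    have hyK : ‖y‖ ≤ K * ‖A y‖ := by
      have h1 : (Ring.inverse A) (A y) = y := by
        have h2 : (Ring.inverse A) * A = 1 := Ring.inverse_mul_cancel A hAu
        calc (Ring.inverse A) (A y) = ((Ring.inverse A) * A) y := rfl
          _ = (1 : SeqZ p →L[ℂ] SeqZ p) y := by rw [h2]
          _ = y := rfl
      calc ‖y‖ = ‖(Ring.inverse A) (A y)‖ := by rw [h1]
        _ ≤ K * ‖A y‖ := (Ring.inverse A).le_opNorm _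
    have hfinal : ‖x‖ ≤ K * ‖B x‖ + (2 * K + 1) * γ₁ := by
      have c1 : ‖x‖ ≤ ‖y‖ + γ₁ := by rw [hyn]; exact hx1
      have c2 : ‖A y‖ ≤ ‖B x‖ + 2 * γ₁ := by linarith
      have c3 : K * ‖A y‖ ≤ K * (‖B x‖ + 2 * γ₁) := mul_le_mul_of_nonneg_left c2 hK0
      calc ‖x‖ ≤ ‖y‖ + γ₁ := c1
        _ ≤ K * ‖A y‖ + γ₁ := by linarith
        _ ≤ K * (‖B x‖ + 2 * γ₁) + γ₁ := by linarith
        _ = K * ‖B x‖ + (2 * K + 1) * γ₁ := by ring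
    have hγeq : (2 * K + 1) * γ₁ = γ := by
      rw [hγ₁]; field_simp
    linarith [hγeq ▸ hfinal]
  refine ContinuousLinearMap.opNorm_le_bound _ hK0 (fun y => ?_)
  have h1 : B ((Ring.inverse B) y) = y := by
    have h2 : B * (Ring.inverse B) = 1 := Ring.mul_inverse_cancel B hBu
    calc B ((Ring.inverse B) y) = (B * (Ring.inverse B)) y := rfl
      _ = y := by rw [h2]; rfl
  calc ‖(Ring.inverse B) y‖ ≤ K * ‖B ((Ring.inverse B) y)‖ := key _
    _ = K * ‖y‖ := by rw [h1]

end AuxiliaryLemmas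

/-- For `A ∈ PE(U,V,W)`: `‖A‖_p = max_{B ∈ M(U,V,W)} ‖B‖_p = M_p`
(the maximum being attained), and if `(U,V,W)` is compatible also
`‖A⁻¹‖_p = max_{B ∈ M(U,V,W)} ‖B⁻¹‖_p = N_p`. -/
theorem statement8 (U V W : Set ℂ)
    (hUne : U.Nonempty) (hUc : IsCompact U) (hVne : V.Nonempty) (hVc : IsCompact V)
    (hWne : W.Nonempty) (hWc : IsCompact W)
    (p : ℝ≥0∞) [Fact (1 ≤ p)]
    (A : SeqZ p →L[ℂ] SeqZ p) (hA : MemPE U V W A) :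
    (IsGreatest {x : ℝ | ∃ B : SeqZ p →L[ℂ] SeqZ p, MemM U V W B ∧ x = ‖B‖} ‖A‖ ∧
      ‖A‖ = Mnorm U V W p) ∧
    (Compatible U V W →
      IsGreatest {x : ℝ | ∃ B : SeqZ p →L[ℂ] SeqZ p, MemM U V W B ∧ x = ‖Ring.inverse B‖}
        ‖Ring.inverse A‖ ∧
      ‖Ring.inverse A‖ = Nnorm U V W p) := by
  obtain ⟨u, v, w, hr, hpe, hacts⟩ := hA
  have hAM : MemM U V W A := ⟨u, v, w, hr, hacts⟩
  have hg1 : IsGreatest {x : ℝ | ∃ B : SeqZ p →L[ℂ] SeqZ p, MemM U V W B ∧ x = ‖B‖} ‖A‖ := by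
    constructor
    · exact ⟨A, hAM, rfl⟩
    · rintro t ⟨B, ⟨bu, bv, bw, hBr, hBacts⟩, rfl⟩
      exact norm_le_of_pe hpe hacts hBr hBacts
  refine ⟨⟨hg1, hg1.csSup_eq.symm⟩, fun hcomp => ?_⟩
  have hAu : IsUnit A := hcomp p A hAM
  obtain ⟨cu, hcu⟩ := Bornology.IsBounded.exists_norm_le hUc.isBounded
  obtain ⟨cw, hcw⟩ := Bornology.IsBounded.exists_norm_le hWc.isBounded
  have hg2 : IsGreatest
      {x : ℝ | ∃ B : SeqZ p →L[ℂ] SeqZ p, MemM U V W B ∧ x = ‖Ring.inverse B‖}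
      ‖Ring.inverse A‖ := by
    constructor
    · exact ⟨A, hAM, rfl⟩
    · rintro t ⟨B, hBM, rfl⟩
      obtain ⟨bu, bv, bw, hBr, hBacts⟩ := hBM
      exact inv_norm_le_of_pe hpe hacts hAu hBr hBacts (hcomp p B ⟨bu, bv, bw, hBr, hBacts⟩)
        (fun j => hcu _ (hBr.1 j)) (fun j => hcw _ (hBr.2.2 j))
  exact ⟨hg2, hg2.csSup_eq.symm⟩
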